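/- In the multiparametric random simplicial complex model, for simplicial subcomplexes A ⊆ B ⊆ Δ_n such that the boundary of every external face of B of dimension ≤ r is contained in A, the probability of the event {A ⊆ Y ⊆ B} equals (∏_{σ ∈ F(A)} p_σ) · (∏_{σ ∈ E(B)} q_σ), where F(A) is the set of faces of A, E(B) is the set of external faces of B of dimension ≤ r, p_σ = p_i for an i-dimensional face, and q_i = 1 - p_i. -/
import Mathlib


open scoped Classical

/-- The simplicial subcomplexes of the `n`-simplex `Δ_n` (vertex set `Fin (n+1)`)
of dimension at most `r`: collections of nonempty faces with at most `r+1`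
vertices, closed under nonempty subsets. -/
noncomputable def simComplexes (n r : ℕ) : Finset (Finset (Finset (Fin (n + 1)))) :=
  Finset.univ.filter (fun Y =>
    (∀ s ∈ Y, s.Nonempty ∧ s.card ≤ r + 1) ∧
    ∀ s ∈ Y, ∀ t ⊆ s, t.Nonempty → t ∈ Y)

/-- The external faces of `Y` of dimension at most `r`: simplices `σ` of `Δ_n`
of dimension at most `r` which are not faces of `Y` but all of whose proper
nonempty subsets are faces of `Y`. -/
noncomputable def extFaces (n r : ℕ) (Y : Finset (Finset (Fin (n + 1)))) :
    Finset (Finset (Fin (n + 1))) :=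
  Finset.univ.filter (fun σ =>
    σ.Nonempty ∧ σ.card ≤ r + 1 ∧ σ ∉ Y ∧ ∀ t ⊂ σ, t.Nonempty → t ∈ Y)

/-- The Costa–Farber probability of a subcomplex `Y` in the multiparametric
model with probability parameters `p 0, p 1, ...` (an `i`-face has `i+1`
vertices, hence the weight `p (card - 1)`). -/
noncomputable def cfProb (n r : ℕ) (p : ℕ → ℝ) (Y : Finset (Finset (Fin (n + 1)))) : ℝ :=
  (∏ σ ∈ Y, p (σ.card - 1)) * ∏ σ ∈ extFaces n r Y, (1 - p (σ.card - 1))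

lemma mem_simComplexes' {n r : ℕ} {Y : Finset (Finset (Fin (n + 1)))} :
    Y ∈ simComplexes n r ↔ (∀ s ∈ Y, s.Nonempty ∧ s.card ≤ r + 1) ∧
      ∀ s ∈ Y, ∀ t ⊆ s, t.Nonempty → t ∈ Y := by
  simp [simComplexes]

lemma mem_extFaces'' {n r : ℕ} {Y : Finset (Finset (Fin (n + 1)))}
    {σ : Finset (Fin (n + 1))} :
    σ ∈ extFaces n r Y ↔
      σ.Nonempty ∧ σ.card ≤ r + 1 ∧ σ ∉ Y ∧ ∀ t ⊂ σ, t.Nonempty → t ∈ Y := by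
  simp [extFaces]

lemma filter_between_self {n r : ℕ} (A : Finset (Finset (Fin (n + 1))))
    (hA : A ∈ simComplexes n r) :
    (simComplexes n r).filter (fun Y => A ⊆ Y ∧ Y ⊆ A) = {A} := by
  ext Y
  simp only [Finset.mem_filter, Finset.mem_singleton]
  constructor
  · rintro ⟨_, h1, h2⟩; exact Finset.Subset.antisymm h2 h1
  · rintro rfl; exact ⟨hA, le_refl _, le_refl _⟩

lemma cf_aux (n r : ℕ) (p : ℕ → ℝ) :
    ∀ k (A B : Finset (Finset (Fin (n + 1)))), (B \ A).card ≤ k →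
    A ∈ simComplexes n r → B ∈ simComplexes n r → A ⊆ B →
    (∀ σ ∈ extFaces n r B, ∀ t ⊂ σ, t.Nonempty → t ∈ A) →
    ∑ Y ∈ (simComplexes n r).filter (fun Y => A ⊆ Y ∧ Y ⊆ B), cfProb n r p Y =
      (∏ σ ∈ A, p (σ.card - 1)) * ∏ σ ∈ extFaces n r B, (1 - p (σ.card - 1)) := by
  intro k
  induction k with
  | zero =>
    intro A B hcard hA hB hAB hbd
    have hBA : B = A := by
      apply Finset.Subset.antisymm _ hAB
      intro x hx; by_contra hx'
      have hmem : x ∈ B \ A := Finset.mem_sdiff.2 ⟨hx, hx'⟩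
      rw [Finset.card_eq_zero.1 (Nat.le_zero.1 hcard)] at hmem
      exact absurd hmem (Finset.notMem_empty x)
    subst hBA
    rw [filter_between_self B hA, Finset.sum_singleton, cfProb]
  | succ k ih =>
    intro A B hcard hA hB hAB hbd
    by_cases hBA : B ⊆ A
    · have hBA' : B = A := Finset.Subset.antisymm hBA hAB
      subst hBA'
      rw [filter_between_self B hA, Finset.sum_singleton, cfProb]
    · have hne : (B \ A).Nonempty := by rwa [Finset.sdiff_nonempty]
      obtain ⟨σ, hσmem, hσmin⟩ := Finset.exists_min_image (B \ A) Finset.card hne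
      have hσB : σ ∈ B := (Finset.mem_sdiff.1 hσmem).1
      have hσA : σ ∉ A := (Finset.mem_sdiff.1 hσmem).2
      obtain ⟨hAfaces, hAclosed⟩ := mem_simComplexes'.1 hA
      obtain ⟨hBfaces, hBclosed⟩ := mem_simComplexes'.1 hB
      have hσne : σ.Nonempty := (hBfaces σ hσB).1
      have hσcard : σ.card ≤ r + 1 := (hBfaces σ hσB).2
      have hbdσ : ∀ t ⊂ σ, t.Nonempty → t ∈ A := by
        intro t ht htne
        have htB : t ∈ B := hBclosed σ hσB t ht.subset htne
        by_contra htA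
        have h1 := hσmin t (Finset.mem_sdiff.2 ⟨htB, htA⟩)
        exact absurd (Finset.card_lt_card ht) (not_lt.2 h1)
      set A' := insert σ A with hA'def
      set B'' := B.filter (fun τ => ¬ σ ⊆ τ) with hB''def
      have hA' : A' ∈ simComplexes n r := by
        rw [mem_simComplexes']
        constructor
        · intro s hs
          rcases Finset.mem_insert.1 hs with rfl | hs
          · exact ⟨hσne, hσcard⟩
          · exact hAfaces s hs
        · intro s hs t hts htne
          rcases Finset.mem_insert.1 hs with rfl | hs
          · rcases lt_or_eq_of_le (Finset.le_iff_subset.2 hts) with hss | rfl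
            · exact Finset.mem_insert_of_mem (hbdσ t hss htne)
            · exact Finset.mem_insert_self _ _
          · exact Finset.mem_insert_of_mem (hAclosed s hs t hts htne)
      have hA'B : A' ⊆ B := Finset.insert_subset hσB hAB
      have hcardA' : (B \ A').card ≤ k := by
        have heq : B \ A' = (B \ A).erase σ := by
          ext x
          simp only [hA'def, Finset.mem_sdiff, Finset.mem_erase, Finset.mem_insert]
          tauto
        rw [heq, Finset.card_erase_of_mem hσmem]
        omega
      have hB'' : B'' ∈ simComplexes n r := by
        rw [mem_simComplexes']
        constructor
        · intro s hs; exact hBfaces s (Finset.mem_filter.1 hs).1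
        · intro s hs t hts htne
          obtain ⟨hsB, hsσ⟩ := Finset.mem_filter.1 hs
          exact Finset.mem_filter.2 ⟨hBclosed s hsB t hts htne, fun h => hsσ (h.trans hts)⟩
      have hAB'' : A ⊆ B'' := by
        intro a ha
        exact Finset.mem_filter.2 ⟨hAB ha, fun h => hσA (hAclosed a ha σ h hσne)⟩
      have hσB'' : σ ∉ B'' := by
        intro h
        exact (Finset.mem_filter.1 h).2 (le_refl σ)
      have hcardB'' : (B'' \ A).card ≤ k := by
        have hsub : B'' \ A ⊆ (B \ A).erase σ := by
          intro x hx
          obtain ⟨hx1, hx2⟩ := Finset.mem_sdiff.1 hx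
          obtain ⟨hxB, hxσ⟩ := Finset.mem_filter.1 hx1
          refine Finset.mem_erase.2 ⟨?_, Finset.mem_sdiff.2 ⟨hxB, hx2⟩⟩
          rintro rfl; exact hxσ (le_refl _)
        have h1 := Finset.card_le_card hsub
        rw [Finset.card_erase_of_mem hσmem] at h1
        omega
      have hext : extFaces n r B'' = insert σ (extFaces n r B) := by
        ext τ
        rw [mem_extFaces'', Finset.mem_insert, mem_extFaces'']
        constructor
        · rintro ⟨hne', hcard', hnot, hsubs⟩
          by_cases hτB : τ ∈ B
          · left
            have hστ : σ ⊆ τ := by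
              by_contra h
              exact hnot (Finset.mem_filter.2 ⟨hτB, h⟩)
            rcases lt_or_eq_of_le (Finset.le_iff_subset.2 hστ) with hss | heq
            · exact absurd (hsubs σ hss hσne) hσB''
            · exact heq.symm
          · right
            exact ⟨hne', hcard', hτB,
              fun t ht htne => (Finset.mem_filter.1 (hsubs t ht htne)).1⟩
        · rintro (rfl | ⟨hne', hcard', hnot, hsubs⟩)
          · exact ⟨hσne, hσcard, hσB'', fun t ht htne => hAB'' (hbdσ t ht htne)⟩
          · refine ⟨hne', hcard', fun h => hnot (Finset.mem_filter.1 h).1,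
              fun t ht htne => hAB'' (hbd τ ?_ t ht htne)⟩
            exact mem_extFaces''.2 ⟨hne', hcard', hnot, hsubs⟩
      have hσnotext : σ ∉ extFaces n r B := fun h => (mem_extFaces''.1 h).2.2.1 hσB
      have hbd'' : ∀ τ ∈ extFaces n r B'', ∀ t ⊂ τ, t.Nonempty → t ∈ A := by
        rw [hext]
        intro τ hτ
        rcases Finset.mem_insert.1 hτ with rfl | hτ
        · exact hbdσ
        · exact hbd τ hτ
      have hsplit := Finset.sum_filter_add_sum_filter_not
        ((simComplexes n r).filter (fun Y => A ⊆ Y ∧ Y ⊆ B)) (fun Y => σ ∈ Y)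
        (cfProb n r p)
      rw [← hsplit]
      have e1 : ((simComplexes n r).filter (fun Y => A ⊆ Y ∧ Y ⊆ B)).filter
          (fun Y => σ ∈ Y) = (simComplexes n r).filter (fun Y => A' ⊆ Y ∧ Y ⊆ B) := by
        ext Y
        simp only [Finset.mem_filter, hA'def]
        constructor
        · rintro ⟨⟨hY, h1, h2⟩, h3⟩
          exact ⟨hY, Finset.insert_subset h3 h1, h2⟩
        · rintro ⟨hY, h1, h2⟩
          exact ⟨⟨hY, (Finset.subset_insert σ A).trans h1, h2⟩,
            h1 (Finset.mem_insert_self σ A)⟩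
      have e2 : ((simComplexes n r).filter (fun Y => A ⊆ Y ∧ Y ⊆ B)).filter
          (fun Y => ¬ σ ∈ Y) = (simComplexes n r).filter (fun Y => A ⊆ Y ∧ Y ⊆ B'') := by
        ext Y
        simp only [Finset.mem_filter]
        constructor
        · rintro ⟨⟨hY, h1, h2⟩, h3⟩
          refine ⟨hY, h1, fun τ hτ => Finset.mem_filter.2 ⟨h2 hτ, fun hστ => ?_⟩⟩
          exact h3 ((mem_simComplexes'.1 hY).2 τ hτ σ hστ hσne)
        · rintro ⟨hY, h1, h2⟩
          exact ⟨⟨hY, h1, h2.trans (Finset.filter_subset _ _)⟩, fun h => hσB'' (h2 h)⟩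
      rw [e1, e2,
        ih A' B hcardA' hA' hB hA'B
          (fun τ hτ t ht htne => Finset.mem_insert_of_mem (hbd τ hτ t ht htne)),
        ih A B'' hcardB'' hA hB'' hAB'' hbd'', hext,
        Finset.prod_insert hσA, Finset.prod_insert hσnotext]
      ring

/-- Costa–Farber, Lemma 2.3: if `A ⊆ B ⊆ Δ_n` are subcomplexes such that the
boundary of every external face of `B` of dimension `≤ r` is contained in `A`,
then `P{A ⊆ Y ⊆ B} = ∏_{σ ∈ F(A)} p_σ · ∏_{σ ∈ E(B)} q_σ`. -/
theorem stmt9 (n r : ℕ) (p : ℕ → ℝ) (hp : ∀ i, 0 ≤ p i ∧ p i ≤ 1)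
    (A B : Finset (Finset (Fin (n + 1))))
    (hA : A ∈ simComplexes n r) (hB : B ∈ simComplexes n r) (hAB : A ⊆ B)
    (hbd : ∀ σ ∈ extFaces n r B, ∀ t ⊂ σ, t.Nonempty → t ∈ A) :
    ∑ Y ∈ (simComplexes n r).filter (fun Y => A ⊆ Y ∧ Y ⊆ B), cfProb n r p Y =
      (∏ σ ∈ A, p (σ.card - 1)) * ∏ σ ∈ extFaces n r B, (1 - p (σ.card - 1)) := by
  exact cf_aux n r p (B \ A).card A B (le_refl _) hA hB hAB hbd
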